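/- Let c ≥ 2 and let ν₁,…,ν_c be nonzero real numbers such that ν_i > 0 for at least one i and ν_j < 0 for at least one j. Let ε : [0,1] → ℝ be continuous with ε(t) > 0 for all t. Then there exist t₀ ∈ (0,1], real constants d₁,…,d_{c−1}, and continuous functions n₁,…,n_c : [0,t₀] → ℝ such that n_i(t) > 0 for all i and t, n_i(t) = (ν_i/ν_c)·n_c(t) + d_i for all 1 ≤ i ≤ c−1 and all t, and ∏_{i=1}^c (n_i(t)/n(t))^{ν_i} = ε(t) for all t ∈ [0,t₀], where n(t) = n₁(t)+⋯+n_c(t). -/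

import Mathlib

open Real Filter Set Topology

lemma feasible_key (P N : ℝ) (hP : 0 < P) (hN : 0 < N) :
    ∃ φ : ℝ → ℝ, Continuous φ ∧ (∀ y, φ y ∈ Set.Ioo (-1:ℝ) 1) ∧
      ∀ y, P * Real.log (1 + φ y) - N * Real.log (1 - φ y)
        - (P - N) * Real.log (P * (1 + φ y) + N * (1 - φ y)) = y := by
  set G : ℝ → ℝ := fun ξ =>
    P * Real.log (1 + ξ) - N * Real.log (1 - ξ)
      - (P - N) * Real.log (P * (1 + ξ) + N * (1 - ξ)) with hG
  set S : Set ℝ := Set.Ioo (-1:ℝ) 1 with hS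
  have hu : ∀ x ∈ S, (0:ℝ) < 1 + x := fun x hx => by
    have := hx.1; linarith
  have hv : ∀ x ∈ S, (0:ℝ) < 1 - x := fun x hx => by
    have := hx.2; linarith
  have hw : ∀ x ∈ S, (0:ℝ) < P * (1 + x) + N * (1 - x) := fun x hx => by
    have h1 := hu x hx; have h2 := hv x hx; positivity
  have hcontAt : ∀ x ∈ S, ContinuousAt G x := by
    intro x hx
    have h1 : ContinuousAt (fun x : ℝ => 1 + x) x := by fun_prop
    have h2 : ContinuousAt (fun x : ℝ => 1 - x) x := by fun_prop
    have h3 : ContinuousAt (fun x : ℝ => P * (1 + x) + N * (1 - x)) x := by fun_prop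
    exact ((h1.log (hu x hx).ne').const_mul P |>.sub
      ((h2.log (hv x hx).ne').const_mul N)).sub
      ((h3.log (hw x hx).ne').const_mul (P - N))
  have hGc : ContinuousOn G S := fun x hx => (hcontAt x hx).continuousWithinAt
  have hderiv : ∀ x ∈ S, HasDerivAt G
      (P * (1 / (1 + x)) - N * (-1 / (1 - x))
        - (P - N) * ((P * 1 + N * (-1)) / (P * (1 + x) + N * (1 - x)))) x := by
    intro x hx
    have h1 : HasDerivAt (fun ξ : ℝ => 1 + ξ) 1 x := (hasDerivAt_id x).const_add 1
    have h2 : HasDerivAt (fun ξ : ℝ => 1 - ξ) (-1) x := (hasDerivAt_id x).const_sub 1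
    have h3 : HasDerivAt (fun ξ : ℝ => P * (1 + ξ) + N * (1 - ξ)) (P * 1 + N * (-1)) x :=
      (h1.const_mul P).add (h2.const_mul N)
    exact (((h1.log (hu x hx).ne').const_mul P).sub
      ((h2.log (hv x hx).ne').const_mul N)).sub
      ((h3.log (hw x hx).ne').const_mul (P - N))
  have hmono : StrictMonoOn G S := by
    apply strictMonoOn_of_deriv_pos (convex_Ioo _ _) hGc
    intro x hx
    rw [interior_Ioo] at hx
    rw [(hderiv x hx).deriv]
    have h1 := hu x hx; have h2 := hv x hx; have h3 := hw x hx
    have key : P * (1 / (1 + x)) - N * (-1 / (1 - x))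
        - (P - N) * ((P * 1 + N * (-1)) / (P * (1 + x) + N * (1 - x)))
        = 4 * P * N / ((1 + x) * (1 - x) * (P * (1 + x) + N * (1 - x))) := by
      field_simp
      ring
    rw [key]
    positivity
  have htend1 : Tendsto (fun ξ : ℝ => 1 + ξ) (𝓝[>] (-1:ℝ)) (𝓝[>] (0:ℝ)) := by
    apply tendsto_nhdsWithin_of_tendsto_nhds_of_eventually_within
    · have h : Tendsto (fun ξ : ℝ => 1 + ξ) (𝓝 (-1:ℝ)) (𝓝 (1 + -1)) :=
        (continuous_const.add continuous_id).tendsto _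
      simpa using h.mono_left nhdsWithin_le_nhds
    · filter_upwards [self_mem_nhdsWithin] with x hx
      simp only [Set.mem_Ioi] at hx ⊢; linarith
  have htend2 : Tendsto (fun ξ : ℝ => 1 - ξ) (𝓝[<] (1:ℝ)) (𝓝[>] (0:ℝ)) := by
    apply tendsto_nhdsWithin_of_tendsto_nhds_of_eventually_within
    · have h : Tendsto (fun ξ : ℝ => 1 - ξ) (𝓝 (1:ℝ)) (𝓝 (1 - 1)) :=
        (continuous_const.sub continuous_id).tendsto _
      simpa using h.mono_left nhdsWithin_le_nhds
    · filter_upwards [self_mem_nhdsWithin] with x hx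
      simp only [Set.mem_Iio] at hx; simp only [Set.mem_Ioi]; linarith
  have hbot : Tendsto G (𝓝[>] (-1:ℝ)) atBot := by
    have hfa : Tendsto (fun ξ : ℝ => P * Real.log (1 + ξ)) (𝓝[>] (-1:ℝ)) atBot :=
      (Real.tendsto_log_nhdsGT_zero.comp htend1).const_mul_atBot hP
    have hrest : Tendsto (fun ξ : ℝ =>
        -(N * Real.log (1 - ξ)) - (P - N) * Real.log (P * (1 + ξ) + N * (1 - ξ)))
        (𝓝[>] (-1:ℝ)) (𝓝 (-(N * Real.log (1 - (-1)))
          - (P - N) * Real.log (P * (1 + (-1)) + N * (1 - (-1))))) := by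
      apply Filter.Tendsto.mono_left _ nhdsWithin_le_nhds
      apply ContinuousAt.tendsto
      have h2 : ContinuousAt (fun x : ℝ => 1 - x) (-1:ℝ) := by fun_prop
      have h3 : ContinuousAt (fun x : ℝ => P * (1 + x) + N * (1 - x)) (-1:ℝ) := by fun_prop
      have e2 : ((fun x : ℝ => 1 - x) (-1:ℝ)) ≠ 0 := by norm_num
      have e3 : ((fun x : ℝ => P * (1 + x) + N * (1 - x)) (-1:ℝ)) ≠ 0 := by
        show (P * (1 + (-1)) + N * (1 - (-1)) : ℝ) ≠ 0
        have h : (P * (1 + (-1)) + N * (1 - (-1)) : ℝ) = 2 * N := by ring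
        rw [h]; positivity
      exact (((h2.log e2).const_mul N).neg).sub ((h3.log e3).const_mul (P - N))
    have h := Filter.tendsto_atBot_add_right_of_ge' _ _ hfa
      (hrest.eventually_le_const (lt_add_one _))
    apply h.congr
    intro x; simp only [hG]; ring
  have htop : Tendsto G (𝓝[<] (1:ℝ)) atTop := by
    have hfa : Tendsto (fun ξ : ℝ => -(N * Real.log (1 - ξ))) (𝓝[<] (1:ℝ)) atTop := by
      have h : Tendsto (fun ξ : ℝ => N * Real.log (1 - ξ)) (𝓝[<] (1:ℝ)) atBot :=
        (Real.tendsto_log_nhdsGT_zero.comp htend2).const_mul_atBot hN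
      exact tendsto_neg_atBot_atTop.comp h
    have hrest : Tendsto (fun ξ : ℝ =>
        P * Real.log (1 + ξ) - (P - N) * Real.log (P * (1 + ξ) + N * (1 - ξ)))
        (𝓝[<] (1:ℝ)) (𝓝 (P * Real.log (1 + 1)
          - (P - N) * Real.log (P * (1 + 1) + N * (1 - 1)))) := by
      apply Filter.Tendsto.mono_left _ nhdsWithin_le_nhds
      apply ContinuousAt.tendsto
      have h1 : ContinuousAt (fun x : ℝ => 1 + x) (1:ℝ) := by fun_prop
      have h3 : ContinuousAt (fun x : ℝ => P * (1 + x) + N * (1 - x)) (1:ℝ) := by fun_prop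
      have e1 : ((fun x : ℝ => 1 + x) (1:ℝ)) ≠ 0 := by norm_num
      have e3 : ((fun x : ℝ => P * (1 + x) + N * (1 - x)) (1:ℝ)) ≠ 0 := by
        show (P * (1 + 1) + N * (1 - 1) : ℝ) ≠ 0
        have h : (P * (1 + 1) + N * (1 - 1) : ℝ) = 2 * P := by ring
        rw [h]; positivity
      exact ((h1.log e1).const_mul P).sub ((h3.log e3).const_mul (P - N))
    have h := Filter.tendsto_atTop_add_right_of_le' _ _ hfa
      (hrest.eventually_const_le (sub_one_lt _))
    apply h.congr
    intro x; simp only [hG]; ring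
  have hsurj : ∀ y : ℝ, ∃ x ∈ S, G x = y := by
    intro y
    have hSa : S ∈ 𝓝[>] (-1:ℝ) := Ioo_mem_nhdsGT_of_mem ⟨le_refl _, by norm_num⟩
    have hSb : S ∈ 𝓝[<] (1:ℝ) := Ioo_mem_nhdsLT_of_mem ⟨by norm_num, le_refl _⟩
    obtain ⟨a, haG, haS⟩ := ((hbot.eventually (eventually_lt_atBot y)).and
      (eventually_of_mem hSa fun x hx => hx)).exists
    obtain ⟨b, hbG, hbS⟩ := ((htop.eventually (eventually_gt_atTop y)).and
      (eventually_of_mem hSb fun x hx => hx)).exists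
    have hab : a ≤ b := by
      by_contra hcon
      push_neg at hcon
      have := hmono.monotoneOn hbS haS hcon.le
      linarith
    have hIccS : Set.Icc a b ⊆ S := fun z hz =>
      ⟨lt_of_lt_of_le haS.1 hz.1, lt_of_le_of_lt hz.2 hbS.2⟩
    obtain ⟨x, hxI, hxG⟩ := intermediate_value_Icc hab (hGc.mono hIccS) ⟨haG.le, hbG.le⟩
    exact ⟨x, hIccS hxI, hxG⟩
  have hsm : StrictMono (fun p : S => G p) := fun p q h => hmono p.2 q.2 h
  have hsj : Function.Surjective (fun p : S => G p) := by
    intro y; obtain ⟨x, hx, hGx⟩ := hsurj y; exact ⟨⟨x, hx⟩, hGx⟩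
  let e := StrictMono.orderIsoOfSurjective _ hsm hsj
  refine ⟨fun y => ((e.symm y : S) : ℝ), ?_, fun y => (e.symm y).2, fun y => ?_⟩
  · exact continuous_subtype_val.comp e.symm.continuous
  · exact StrictMono.orderIsoOfSurjective_self_symm_apply _ hsm hsj y

/-- Existence of a locally defined feasible chemical path realizing a prescribed
continuous positive activity quotient `ε(t)`: there exist `t₀ ∈ (0,1]`, linkage
constants `dᵢ`, and continuous positive molar amounts `nᵢ` on `[0,t₀]` with
`nᵢ = (νᵢ/ν_c)·n_c + dᵢ` for `i ≠ c` and `∏ (nᵢ/n)^{νᵢ} = ε` on `[0,t₀]`. -/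
theorem exists_feasible_path
    (c : ℕ) (hc : 2 ≤ c) (ν : Fin c → ℝ)
    (hν : ∀ i, ν i ≠ 0) (hνpos : ∃ i, 0 < ν i) (hνneg : ∃ j, ν j < 0)
    (pivot : Fin c) (hpivot : (pivot : ℕ) = c - 1)
    (ε : ℝ → ℝ) (hεcont : ContinuousOn ε (Set.Icc 0 1))
    (hεpos : ∀ t ∈ Set.Icc (0:ℝ) 1, 0 < ε t) :
    ∃ t₀ ∈ Set.Ioc (0:ℝ) 1, ∃ d : Fin c → ℝ, ∃ n : Fin c → ℝ → ℝ,
      (∀ i, ContinuousOn (n i) (Set.Icc 0 t₀)) ∧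
      (∀ i, ∀ t ∈ Set.Icc (0:ℝ) t₀, 0 < n i t) ∧
      (∀ i, i ≠ pivot → ∀ t ∈ Set.Icc (0:ℝ) t₀,
        n i t = (ν i / ν pivot) * n pivot t + d i) ∧
      (∀ t ∈ Set.Icc (0:ℝ) t₀,
        ∏ i, (n i t / ∑ j, n j t) ^ (ν i) = ε t) := by
  classical
  set P : ℝ := ∑ i ∈ Finset.univ.filter (fun i => 0 < ν i), ν i with hPdef
  set N : ℝ := ∑ i ∈ Finset.univ.filter (fun i => ¬ 0 < ν i), (-ν i) with hNdef
  have hneg : ∀ i : Fin c, ¬ 0 < ν i → ν i < 0 :=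
    fun i h => lt_of_le_of_ne (not_lt.1 h) (hν i)
  have hP : 0 < P := by
    obtain ⟨i, hi⟩ := hνpos
    exact Finset.sum_pos (fun j hj => (Finset.mem_filter.1 hj).2)
      ⟨i, Finset.mem_filter.2 ⟨Finset.mem_univ _, hi⟩⟩
  have hN : 0 < N := by
    obtain ⟨j, hj⟩ := hνneg
    exact Finset.sum_pos (fun k hk => neg_pos.2 (hneg k (Finset.mem_filter.1 hk).2))
      ⟨j, Finset.mem_filter.2 ⟨Finset.mem_univ _, not_lt.2 hj.le⟩⟩
  set C : ℝ := ∑ i, ν i * Real.log |ν i| with hCdef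
  obtain ⟨φ, hφc, hφmem, hφeq⟩ := feasible_key P N hP hN
  set ξ : ℝ → ℝ := fun t => φ (Real.log (ε t) - C) with hξdef
  -- positivity of the amounts along the path
  have hnpos : ∀ (i : Fin c) (x : ℝ), x ∈ Set.Ioo (-1:ℝ) 1 → 0 < |ν i| + ν i * x := by
    intro i x hx
    have h1 : |x| < 1 := abs_lt.2 ⟨hx.1, hx.2⟩
    have h2 : (0:ℝ) < |ν i| := abs_pos.2 (hν i)
    have h3 : -|ν i * x| ≤ ν i * x := neg_abs_le _
    rw [abs_mul] at h3
    nlinarith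
  -- sum identities
  have hsum_abs : ∑ i, |ν i| = P + N := by
    rw [← Finset.sum_filter_add_sum_filter_not Finset.univ (fun i => 0 < ν i) (fun i => |ν i|)]
    congr 1
    · exact Finset.sum_congr rfl fun i hi => abs_of_pos (Finset.mem_filter.1 hi).2
    · exact Finset.sum_congr rfl fun i hi => abs_of_neg (hneg i (Finset.mem_filter.1 hi).2)
  have hsum_nu : ∑ i, ν i = P - N := by
    rw [← Finset.sum_filter_add_sum_filter_not Finset.univ (fun i => 0 < ν i) (fun i => ν i)]
    have h2 : ∑ i ∈ Finset.univ.filter (fun i => ¬ 0 < ν i), ν i = -N := by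
      simp [hNdef, Finset.sum_neg_distrib]
    rw [h2]; ring
  have hsumn : ∀ x : ℝ, ∑ j, (|ν j| + ν j * x) = P * (1 + x) + N * (1 - x) := by
    intro x
    rw [Finset.sum_add_distrib, ← Finset.sum_mul, hsum_abs, hsum_nu]; ring
  -- termwise log identity
  have hlogsum : ∀ x : ℝ, x ∈ Set.Ioo (-1:ℝ) 1 →
      ∑ i, ν i * Real.log (|ν i| + ν i * x)
        = C + P * Real.log (1 + x) - N * Real.log (1 - x) := by
    intro x hx
    have hu : (0:ℝ) < 1 + x := by have := hx.1; linarith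
    have hv : (0:ℝ) < 1 - x := by have := hx.2; linarith
    have hterm : ∀ i ∈ Finset.univ, ν i * Real.log (|ν i| + ν i * x)
        = ν i * Real.log |ν i|
          + (if 0 < ν i then ν i * Real.log (1 + x) else ν i * Real.log (1 - x)) := by
      intro i _
      by_cases h : 0 < ν i
      · rw [if_pos h]
        have he : |ν i| + ν i * x = ν i * (1 + x) := by rw [abs_of_pos h]; ring
        rw [he, Real.log_mul h.ne' hu.ne', abs_of_pos h]
        ring
      · rw [if_neg h]
        have hn := hneg i h
        have he : |ν i| + ν i * x = (-ν i) * (1 - x) := by rw [abs_of_neg hn]; ring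
        have ha : |ν i| = -ν i := abs_of_neg hn
        rw [he, Real.log_mul (by linarith : (-ν i) ≠ 0) hv.ne', ha]
        ring
    rw [Finset.sum_congr rfl hterm, Finset.sum_add_distrib, Finset.sum_ite,
      ← Finset.sum_mul, ← Finset.sum_mul]
    have h2 : ∑ i ∈ Finset.univ.filter (fun i => ¬ 0 < ν i), ν i = -N := by
      simp [hNdef, Finset.sum_neg_distrib]
    rw [h2, hCdef]
    rw [← hPdef]
    ring_nf
  -- continuity of ξ
  have hξc : ContinuousOn ξ (Set.Icc (0:ℝ) 1) := by
    apply hφc.comp_continuousOn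
    exact (hεcont.log fun t ht => (hεpos t ht).ne').sub continuousOn_const
  refine ⟨1, ⟨one_pos, le_refl 1⟩,
    fun i => |ν i| - ν i / ν pivot * |ν pivot|,
    fun i t => |ν i| + ν i * ξ t, ?_, ?_, ?_, ?_⟩
  · intro i
    exact continuousOn_const.add (continuousOn_const.mul hξc)
  · intro i t _
    exact hnpos i (ξ t) (hφmem _)
  · intro i _ t _
    have hp := hν pivot
    show |ν i| + ν i * ξ t
      = ν i / ν pivot * (|ν pivot| + ν pivot * ξ t) + (|ν i| - ν i / ν pivot * |ν pivot|)
    field_simp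
    ring
  · intro t ht
    have hxm : ξ t ∈ Set.Ioo (-1:ℝ) 1 := hφmem _
    have hu : (0:ℝ) < 1 + ξ t := by have := hxm.1; linarith
    have hv : (0:ℝ) < 1 - ξ t := by have := hxm.2; linarith
    have hW : (0:ℝ) < ∑ j, (|ν j| + ν j * ξ t) := by
      rw [hsumn]; positivity
    have hεt := hεpos t ht
    show ∏ i, ((|ν i| + ν i * ξ t) / ∑ j, (|ν j| + ν j * ξ t)) ^ (ν i) = ε t
    have hprod : ∏ i, ((|ν i| + ν i * ξ t) / ∑ j, (|ν j| + ν j * ξ t)) ^ (ν i)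
        = Real.exp (∑ i, Real.log ((|ν i| + ν i * ξ t) / ∑ j, (|ν j| + ν j * ξ t)) * ν i) := by
      rw [Real.exp_sum]
      exact Finset.prod_congr rfl fun i _ =>
        Real.rpow_def_of_pos (div_pos (hnpos i (ξ t) hxm) hW) _
    rw [hprod]
    have hexpand : ∑ i, Real.log ((|ν i| + ν i * ξ t) / ∑ j, (|ν j| + ν j * ξ t)) * ν i
        = (∑ i, ν i * Real.log (|ν i| + ν i * ξ t))
          - (∑ i, ν i) * Real.log (∑ j, (|ν j| + ν j * ξ t)) := by
      rw [Finset.sum_mul]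
      rw [← Finset.sum_sub_distrib]
      refine Finset.sum_congr rfl fun i _ => ?_
      rw [Real.log_div (hnpos i (ξ t) hxm).ne' hW.ne']
      ring
    rw [hexpand, hlogsum (ξ t) hxm, hsum_nu]
    have hWlog : Real.log (∑ j, (|ν j| + ν j * ξ t))
        = Real.log (P * (1 + ξ t) + N * (1 - ξ t)) := by rw [hsumn]
    rw [hWlog]
    have hkey := hφeq (Real.log (ε t) - C)
    have hxi : ξ t = φ (Real.log (ε t) - C) := rfl
    rw [hxi]
    have : C + P * Real.log (1 + φ (Real.log (ε t) - C))
        - N * Real.log (1 - φ (Real.log (ε t) - C))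
        - (P - N) * Real.log (P * (1 + φ (Real.log (ε t) - C))
            + N * (1 - φ (Real.log (ε t) - C))) = Real.log (ε t) := by
      rw [show C + P * Real.log (1 + φ (Real.log (ε t) - C))
        - N * Real.log (1 - φ (Real.log (ε t) - C))
        - (P - N) * Real.log (P * (1 + φ (Real.log (ε t) - C))
            + N * (1 - φ (Real.log (ε t) - C)))
        = C + (P * Real.log (1 + φ (Real.log (ε t) - C))
          - N * Real.log (1 - φ (Real.log (ε t) - C))
          - (P - N) * Real.log (P * (1 + φ (Real.log (ε t) - C))
              + N * (1 - φ (Real.log (ε t) - C)))) from by ring, hkey]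
      ring
    rw [this]
    exact Real.exp_log hεt
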